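/- Per-task weighted bound (Step 1 of the proof of Theorem 1): Let H be a nonempty family of bounded measurable K-Lipschitz functions X → ℝ with K > 0, let D^1, …, D^T be Borel probability measures on the metric space X with bounded measurable ground-truth labeling functions f_1, …, f_T : X → ℝ, and write L_j(h) = L_{D^j}(h, f_j) and ξ_{t,i} = inf_{h ∈ H} (L_t(h) + L_i(h)). Fix a task t ∈ {1, …, T}, let α ∈ Δ_T, and for each i ∈ {1, …, T} let W_i be a dual Wasserstein bound for (D^i, D^t). Then for every h ∈ H: L_t(h) ≤ Σ_{i=1}^T α_i L_i(h) + Σ_{i=1}^T α_i ξ_{t,i} + 2K Σ_{i=1}^T α_i W_i. -/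

import Mathlib

open MeasureTheory

/-- Expected loss `L_μ(u, v) = ∫ |u(x) − v(x)| dμ(x)`. -/
noncomputable def expLoss {X : Type*} [MeasurableSpace X] (μ : Measure X)
    (u v : X → ℝ) : ℝ :=
  ∫ x, |u x - v x| ∂μ

/-- A function is bounded if its absolute values are uniformly bounded. -/
def BoundedFun {X : Type*} (g : X → ℝ) : Prop := ∃ C : ℝ, ∀ x, |g x| ≤ C

/-- `g : X → ℝ` is `K`-Lipschitz if `|g(x) − g(y)| ≤ K · d(x, y)` for all `x, y`. -/
def LipschitzCoef {X : Type*} [MetricSpace X] (K : ℝ) (g : X → ℝ) : Prop :=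
  ∀ x y, |g x - g y| ≤ K * dist x y

/-- `W` is a dual Wasserstein bound for `(μ, ν)` if `|∫ f dμ − ∫ f dν| ≤ W`
for every bounded 1-Lipschitz `f : X → ℝ`. -/
def DualWassersteinBound {X : Type*} [MetricSpace X] [MeasurableSpace X]
    (μ ν : Measure X) (W : ℝ) : Prop :=
  ∀ f : X → ℝ, BoundedFun f → LipschitzCoef 1 f →
    |(∫ x, f x ∂μ) - ∫ x, f x ∂ν| ≤ W

section Aux
open Filter

lemma integrable_of_bdd {X : Type*} [MeasurableSpace X] (μ : Measure X)
    [IsFiniteMeasure μ] {g : X → ℝ} (hm : Measurable g) (hb : BoundedFun g) :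
    Integrable g μ := by
  obtain ⟨C, hC⟩ := hb
  exact Integrable.mono' (integrable_const C) hm.aestronglyMeasurable
    (Eventually.of_forall fun x => by simpa using hC x)

lemma boundedFun_abs_sub {X : Type*} {u v : X → ℝ} (hu : BoundedFun u)
    (hv : BoundedFun v) : BoundedFun (fun x => |u x - v x|) := by
  obtain ⟨C, hC⟩ := hu; obtain ⟨C', hC'⟩ := hv
  refine ⟨C + C', fun x => ?_⟩
  have := hC x; have := hC' x
  rw [abs_abs]
  calc |u x - v x| ≤ |u x| + |v x| := abs_sub _ _
    _ ≤ C + C' := by linarith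

lemma expLoss_comm {X : Type*} [MeasurableSpace X] (μ : Measure X)
    (u v : X → ℝ) : expLoss μ u v = expLoss μ v u := by
  unfold expLoss
  simp_rw [abs_sub_comm]

lemma expLoss_triangle {X : Type*} [MeasurableSpace X] (μ : Measure X)
    [IsFiniteMeasure μ] {u v w : X → ℝ}
    (hu : Measurable u) (hv : Measurable v) (hw : Measurable w)
    (hub : BoundedFun u) (hvb : BoundedFun v) (hwb : BoundedFun w) :
    expLoss μ u w ≤ expLoss μ u v + expLoss μ v w := by
  have i1 : Integrable (fun x => |u x - v x|) μ :=
    integrable_of_bdd μ ((hu.sub hv).abs) (boundedFun_abs_sub hub hvb)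
  have i2 : Integrable (fun x => |v x - w x|) μ :=
    integrable_of_bdd μ ((hv.sub hw).abs) (boundedFun_abs_sub hvb hwb)
  have i0 : Integrable (fun x => |u x - w x|) μ :=
    integrable_of_bdd μ ((hu.sub hw).abs) (boundedFun_abs_sub hub hwb)
  unfold expLoss
  rw [← integral_add i1 i2]
  exact integral_mono i0 (i1.add i2) fun x => abs_sub_le _ _ _

end Aux

/-- Per-task weighted bound (Step 1 of the proof of Theorem 1):
`L_t(h) ≤ Σ_i α_i L_i(h) + Σ_i α_i ξ_{t,i} + 2K Σ_i α_i W_i`,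
where `ξ_{t,i} = inf_{g ∈ H} (L_t(g) + L_i(g))`. -/
theorem per_task_weighted_bound
    {X : Type*} [MetricSpace X] [MeasurableSpace X] [BorelSpace X]
    (K : ℝ) (hK : 0 < K)
    (H : Set (X → ℝ)) (hHne : H.Nonempty)
    (hHb : ∀ g ∈ H, BoundedFun g)
    (hHm : ∀ g ∈ H, Measurable g)
    (hHl : ∀ g ∈ H, LipschitzCoef K g)
    (T : ℕ)
    (D : Fin T → Measure X) (hD : ∀ j, IsProbabilityMeasure (D j))
    (f : Fin T → X → ℝ)
    (hfb : ∀ j, BoundedFun (f j)) (hfm : ∀ j, Measurable (f j))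
    (t : Fin T)
    (α : Fin T → ℝ) (hα0 : ∀ i, 0 ≤ α i) (hα1 : ∑ i, α i = 1)
    (W : Fin T → ℝ) (hW : ∀ i, DualWassersteinBound (D i) (D t) (W i))
    (h : X → ℝ) (hh : h ∈ H) :
    expLoss (D t) h (f t) ≤
      (∑ i, α i * expLoss (D i) h (f i))
      + (∑ i, α i * (⨅ g : H, (expLoss (D t) (g : X → ℝ) (f t)
            + expLoss (D i) (g : X → ℝ) (f i))))
      + 2 * K * ∑ i, α i * W i := by
  obtain ⟨Ch, hCh⟩ := hHb h hh
  obtain ⟨Cft, hCft⟩ := hfb t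
  haveI : ∀ j, IsProbabilityMeasure (D j) := hD
  haveI : Nonempty H := hHne.to_subtype
  -- per-i bound
  have key : ∀ i : Fin T, expLoss (D t) h (f t) ≤
      expLoss (D i) h (f i)
      + (⨅ g : H, (expLoss (D t) (g : X → ℝ) (f t)
            + expLoss (D i) (g : X → ℝ) (f i)))
      + 2 * K * W i := by
    intro i
    have hle : expLoss (D t) h (f t) - expLoss (D i) h (f i) - 2 * K * W i ≤
        ⨅ g : H, (expLoss (D t) (g : X → ℝ) (f t)
            + expLoss (D i) (g : X → ℝ) (f i)) := by
      apply le_ciInf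
      rintro ⟨g, hg⟩
      simp only
      -- step B: Wasserstein transfer
      obtain ⟨Cg, hCg⟩ := hHb g hg
      set f0 : X → ℝ := fun x => (2 * K)⁻¹ * |h x - g x| with hf0
      have h2K : (0:ℝ) < 2 * K := by linarith
      have hf0b : BoundedFun f0 := by
        refine ⟨(2 * K)⁻¹ * (Ch + Cg), fun x => ?_⟩
        have h1 := hCh x; have h2 := hCg x
        have : |h x - g x| ≤ Ch + Cg := by
          calc |h x - g x| ≤ |h x| + |g x| := abs_sub _ _
            _ ≤ Ch + Cg := by linarith
        rw [abs_mul, abs_abs, abs_of_pos (inv_pos.mpr h2K)]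
        exact mul_le_mul_of_nonneg_left this (le_of_lt (inv_pos.mpr h2K))
      have hf0l : LipschitzCoef 1 f0 := by
        intro x y
        have hl1 := hHl h hh x y
        have hl2 := hHl g hg x y
        have habs : abs (|h x - g x| - |h y - g y|) ≤ |h x - h y| + |g x - g y| := by
          have h1 := abs_abs_sub_abs_le_abs_sub (h x - g x) (h y - g y)
          have h3 : |h x - g x - (h y - g y)| ≤ |h x - h y| + |g x - g y| := by
            have h4 : h x - g x - (h y - g y) = (h x - h y) - (g x - g y) := by ring
            rw [h4]
            exact abs_sub _ _
          linarith
        have heq : |f0 x - f0 y| = (2 * K)⁻¹ * abs (|h x - g x| - |h y - g y|) := by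
          rw [hf0]; simp only
          rw [← mul_sub, abs_mul, abs_of_pos (inv_pos.mpr h2K)]
        rw [heq, one_mul]
        rw [← mul_le_mul_iff_right₀ h2K, ← mul_assoc, mul_inv_cancel₀ (ne_of_gt h2K), one_mul]
        calc abs (|h x - g x| - |h y - g y|) ≤ |h x - h y| + |g x - g y| := habs
          _ ≤ K * dist x y + K * dist x y := by linarith
          _ = 2 * K * dist x y := by ring
      have hWi := hW i f0 hf0b hf0l
      have hint : ∀ j : Fin T, (∫ x, f0 x ∂(D j)) =
          (2 * K)⁻¹ * ∫ x, |h x - g x| ∂(D j) := by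
        intro j; rw [hf0]; exact integral_const_mul _ _
      rw [hint i, hint t] at hWi
      have hBabs : |(∫ x, |h x - g x| ∂(D i)) - ∫ x, |h x - g x| ∂(D t)| ≤
          2 * K * W i := by
        rw [← mul_sub, abs_mul, abs_of_pos (inv_pos.mpr h2K)] at hWi
        rw [← mul_le_mul_iff_right₀ (inv_pos.mpr h2K), ← mul_assoc,
          inv_mul_cancel₀ (ne_of_gt h2K), one_mul]
        linarith [hWi]
      have hB : expLoss (D t) h g ≤ expLoss (D i) h g + 2 * K * W i := by
        unfold expLoss
        have := abs_le.mp hBabs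
        linarith [this.1, this.2]
      have hA : expLoss (D t) h (f t) ≤ expLoss (D t) h g + expLoss (D t) g (f t) :=
        expLoss_triangle (D t) (hHm h hh) (hHm g hg) (hfm t)
          (hHb h hh) (hHb g hg) (hfb t)
      have hC : expLoss (D i) h g ≤ expLoss (D i) h (f i) + expLoss (D i) g (f i) := by
        have := expLoss_triangle (D i) (hHm h hh) (hfm i) (hHm g hg)
          (hHb h hh) (hfb i) (hHb g hg)
        rwa [expLoss_comm (D i) (f i) g] at this
      linarith
    linarith [hle]
  calc expLoss (D t) h (f t) = ∑ i, α i * expLoss (D t) h (f t) := by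
        rw [← Finset.sum_mul, hα1, one_mul]
    _ ≤ ∑ i, α i * (expLoss (D i) h (f i)
          + (⨅ g : H, (expLoss (D t) (g : X → ℝ) (f t)
              + expLoss (D i) (g : X → ℝ) (f i)))
          + 2 * K * W i) := by
        apply Finset.sum_le_sum
        intro i _
        exact mul_le_mul_of_nonneg_left (key i) (hα0 i)
    _ = (∑ i, α i * expLoss (D i) h (f i))
        + (∑ i, α i * (⨅ g : H, (expLoss (D t) (g : X → ℝ) (f t)
              + expLoss (D i) (g : X → ℝ) (f i))))
        + 2 * K * ∑ i, α i * W i := by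
        rw [Finset.mul_sum]
        rw [← Finset.sum_add_distrib, ← Finset.sum_add_distrib]
        apply Finset.sum_congr rfl
        intro i _
        ring
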